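/- For every θ ∈ (-π/2, π/2) and every real β > 1, one has e^{-iπ/4} · ℱ(β,θ) = -i√2 · 𝒢(β,θ); in particular, since 𝒢(β,θ) is real, the complex number e^{-iπ/4} ℱ(β,θ) is purely imaginary. -/

import Mathlib

set_option maxHeartbeats 1000000


open Complex Real

noncomputable def alphaP (β θ : ℝ) : ℂ :=
  -Complex.I * β * Real.sin θ + Real.sqrt (β ^ 2 - 1) * Real.cos θ

noncomputable def alphaM (β θ : ℝ) : ℂ :=
  -Complex.I * β * Real.sin θ - Real.sqrt (β ^ 2 - 1) * Real.cos θ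

/-- Square root with branch cut along the positive imaginary axis:
sqrt↑(w) := e^{-iπ/4} (i w)^{1/2}, principal branch inside. -/
noncomputable def sqrtUp (w : ℂ) : ℂ :=
  Complex.exp (-Complex.I * Real.pi / 4) * (Complex.I * w) ^ (1 / 2 : ℂ)

/-- ℱ(β,θ) := (-i sin θ + β cos θ (β²-1)^{-1/2}) / (α₊ sqrt↑(α₊ - i))
            - (-i sin θ - β cos θ (β²-1)^{-1/2}) / (α₋ sqrt↑(α₋ - i)). -/
noncomputable def calF (β θ : ℝ) : ℂ :=
  (-Complex.I * Real.sin θ + (β : ℂ) * Real.cos θ * ((Real.sqrt (β ^ 2 - 1) : ℂ))⁻¹)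
      / (alphaP β θ * sqrtUp (alphaP β θ - Complex.I))
    - (-Complex.I * Real.sin θ - (β : ℂ) * Real.cos θ * ((Real.sqrt (β ^ 2 - 1) : ℂ))⁻¹)
      / (alphaM β θ * sqrtUp (alphaM β θ - Complex.I))

/-- ψ₊ := arg(α₊ - i), principal argument. -/
noncomputable def psiP (β θ : ℝ) : ℝ := (alphaP β θ - Complex.I).arg

/-- The real-valued function 𝒢(β,θ). -/
noncomputable def calG (β θ : ℝ) : ℝ :=
  (β * (Real.cos (psiP β θ / 2) + Real.sin (psiP β θ / 2))
      - Real.cos θ * Real.sin θ * (Real.sqrt (β ^ 2 - 1))⁻¹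
        * (Real.cos (psiP β θ / 2) - Real.sin (psiP β θ / 2)))
    / ((β ^ 2 - Real.cos θ ^ 2) * Real.sqrt (β + Real.sin θ))

/-- For θ ∈ (-π/2, π/2) and β > 1,
e^{-iπ/4} ℱ(β,θ) = -i√2 𝒢(β,θ); in particular e^{-iπ/4} ℱ(β,θ) is purely
imaginary (its real part vanishes). -/
lemma cpow_half (z : ℂ) (hz : z ≠ 0) :
    z ^ (1/2 : ℂ)
      = (Real.sqrt (‖z‖) : ℂ)
        * (Real.cos (z.arg / 2) + Real.sin (z.arg / 2) * Complex.I) := by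
  have habs : 0 < ‖z‖ := norm_pos_iff.mpr hz
  have h1 : z ^ (1/2 : ℂ) = Complex.exp (Complex.log z * (1/2)) :=
    Complex.cpow_def_of_ne_zero hz _
  have hlog : Complex.log z = (Real.log (‖z‖) : ℂ) + (z.arg : ℝ) * Complex.I := rfl
  rw [h1, hlog, show ((Real.log (‖z‖) : ℂ) + (z.arg : ℝ) * Complex.I) * (1/2)
      = ((Real.log (‖z‖) / 2 : ℝ) : ℂ) + ((z.arg / 2 : ℝ) : ℂ) * Complex.I by
        push_cast; ring, Complex.exp_add, Complex.exp_mul_I]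
  have hexp : Real.exp (Real.log (‖z‖) / 2) = Real.sqrt (‖z‖) := by
    rw [Real.sqrt_eq_rpow, Real.rpow_def_of_pos habs]; ring_nf
  rw [← Complex.ofReal_exp, hexp, ← Complex.ofReal_cos, ← Complex.ofReal_sin]

theorem stmt_3 (θ β : ℝ) (hθ : θ ∈ Set.Ioo (-(Real.pi / 2)) (Real.pi / 2))
    (hβ : 1 < β) :
    Complex.exp (-Complex.I * Real.pi / 4) * calF β θ
      = -Complex.I * Real.sqrt 2 * (calG β θ : ℂ) ∧
    (Complex.exp (-Complex.I * Real.pi / 4) * calF β θ).re = 0 := by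
  obtain ⟨hθ1, hθ2⟩ := hθ
  set sn := Real.sin θ with hsn_def
  set c := Real.cos θ with hc_def
  set s := Real.sqrt (β ^ 2 - 1) with hs_def
  have hc : 0 < c := Real.cos_pos_of_mem_Ioo ⟨hθ1, hθ2⟩
  have hb1 : (0:ℝ) < β ^ 2 - 1 := by nlinarith
  have hs : 0 < s := Real.sqrt_pos.mpr hb1
  have hs2 : s ^ 2 = β ^ 2 - 1 := Real.sq_sqrt hb1.le
  have hpy : sn ^ 2 + c ^ 2 = 1 := Real.sin_sq_add_cos_sq θ
  have hsn : -1 ≤ sn := Real.neg_one_le_sin θ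
  have hr : 0 < β + sn := by linarith
  set u := Real.sqrt (β + sn) with hu_def
  have hu : 0 < u := Real.sqrt_pos.mpr hr
  have hu2 : u ^ 2 = β + sn := Real.sq_sqrt hr.le
  -- the auxiliary point A = i(α₊ - i)
  set A : ℂ := ((β * sn + 1 : ℝ) : ℂ) + ((s * c : ℝ) : ℂ) * Complex.I with hA_def
  have hAim : 0 < A.im := by simp [hA_def]; positivity
  have hA0 : A ≠ 0 := by intro h; rw [h] at hAim; simp at hAim
  have habsA : ‖A‖ = β + sn := by
    rw [hA_def, Complex.norm_def, Complex.normSq_add_mul_I]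
    rw [show (β * sn + 1) ^ 2 + (s * c) ^ 2 = (β + sn) ^ 2 by nlinarith [hs2, hpy]]
    exact Real.sqrt_sq hr.le
  set φ := A.arg with hphi_def
  have hφ0 : 0 < φ := by
    rcases lt_or_eq_of_le (Complex.arg_nonneg_iff.mpr hAim.le) with h | h
    · exact h
    · exfalso; have := (Complex.arg_eq_zero_iff.mp h.symm).2; linarith
  have hφπ : φ < π := by
    rcases lt_or_eq_of_le (Complex.arg_le_pi A) with h | h
    · exact h
    · exfalso; have := (Complex.arg_eq_pi_iff.mp h).2; linarith
  set cφ := Real.cos (φ / 2) with hcphi_def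
  set sφ := Real.sin (φ / 2) with hsphi_def
  have hunit : cφ ^ 2 + sφ ^ 2 = 1 := by
    rw [hcphi_def, hsphi_def]; exact Real.cos_sq_add_sin_sq _
  -- complex-cast relations
  have hs2c : (s : ℂ) ^ 2 = (β : ℂ) ^ 2 - 1 := by exact_mod_cast congrArg (Complex.ofReal) hs2
  have hpyc : (sn : ℂ) ^ 2 + (c : ℂ) ^ 2 = 1 := by exact_mod_cast congrArg (Complex.ofReal) hpy
  have hunitc : (cφ : ℂ) ^ 2 + (sφ : ℂ) ^ 2 = 1 := by exact_mod_cast congrArg (Complex.ofReal) hunit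
  -- i (alphaP - i) = A
  have hiP : Complex.I * (alphaP β θ - Complex.I) = A := by
    rw [alphaP, hA_def, ← hsn_def, ← hc_def, ← hs_def]
    push_cast
    linear_combination (-(β : ℂ) * sn - 1) * Complex.I_sq
  have hiM : Complex.I * (alphaM β θ - Complex.I) = (starRingEnd ℂ) A := by
    rw [alphaM, hA_def, ← hsn_def, ← hc_def, ← hs_def]
    push_cast
    simp only [map_add, map_mul, map_one, Complex.conj_ofReal, Complex.conj_I]
    linear_combination (-(β : ℂ) * sn - 1) * Complex.I_sq
  set E := Complex.exp (-Complex.I * (π : ℝ) / 4) with hE_def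
  have hconjA0 : (starRingEnd ℂ) A ≠ 0 := by simpa using hA0
  have hvP : sqrtUp (alphaP β θ - Complex.I)
      = E * ((u : ℂ) * ((cφ : ℂ) + (sφ : ℂ) * Complex.I)) := by
    rw [sqrtUp, hiP, cpow_half A hA0, habsA, ← hphi_def, ← hu_def, ← hcphi_def, ← hsphi_def,
      ← hE_def]
  have hvM : sqrtUp (alphaM β θ - Complex.I)
      = E * ((u : ℂ) * ((cφ : ℂ) - (sφ : ℂ) * Complex.I)) := by
    rw [sqrtUp, hiM, cpow_half _ hconjA0, Complex.norm_conj, habsA, ← hu_def, ← hE_def,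
      Complex.arg_conj, ← hphi_def, if_neg (ne_of_lt hφπ), neg_div, Real.cos_neg, Real.sin_neg,
      ← hcphi_def, ← hsphi_def]
    push_cast
    ring
  have hAeq : ((β + sn : ℝ) : ℂ) * ((Real.cos φ : ℝ) + (Real.sin φ : ℝ) * Complex.I) = A := by
    have h := Complex.norm_mul_cos_add_sin_mul_I A
    rw [habsA, ← hphi_def] at h
    rw [Complex.ofReal_cos, Complex.ofReal_sin]
    exact h
  have hψ : psiP β θ = φ - π / 2 := by
    have h2 : alphaP β θ - Complex.I = -Complex.I * A := by
      linear_combination (-Complex.I) * hiP + (alphaP β θ - Complex.I) * Complex.I_sq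
    have h3 : alphaP β θ - Complex.I
        = ((β + sn : ℝ) : ℂ)
          * ((Real.cos (φ - π / 2) : ℝ) + (Real.sin (φ - π / 2) : ℝ) * Complex.I) := by
      rw [Real.cos_sub_pi_div_two, Real.sin_sub_pi_div_two, h2, ← hAeq]
      push_cast [← Complex.ofReal_sin, ← Complex.ofReal_cos]
      linear_combination (-((β : ℂ) + sn) * ((Real.sin φ : ℝ) : ℂ)) * Complex.I_sq
    rw [psiP, h3, Complex.ofReal_cos, Complex.ofReal_sin]
    exact Complex.arg_mul_cos_add_sin_mul_I hr ⟨by linarith [Real.pi_pos], by linarith⟩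
  have hcosψ : Real.cos (psiP β θ / 2) = Real.sqrt 2 / 2 * (cφ + sφ) := by
    rw [hψ, show (φ - π / 2) / 2 = φ / 2 - π / 4 by ring, Real.cos_sub, Real.cos_pi_div_four,
      Real.sin_pi_div_four, ← hcphi_def, ← hsphi_def]
    ring
  have hsinψ : Real.sin (psiP β θ / 2) = Real.sqrt 2 / 2 * (sφ - cφ) := by
    rw [hψ, show (φ - π / 2) / 2 = φ / 2 - π / 4 by ring, Real.sin_sub, Real.cos_pi_div_four,
      Real.sin_pi_div_four, ← hcphi_def, ← hsphi_def]
    ring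
  have hc1 : c ≤ 1 := by rw [hc_def]; exact Real.cos_le_one θ
  have hbc : (0:ℝ) < β ^ 2 - c ^ 2 := by nlinarith
  have hαP0 : alphaP β θ ≠ 0 := by
    intro h
    have h2 : alphaP β θ * (Complex.I * β * sn + (s : ℂ) * c) = ((β ^ 2 - c ^ 2 : ℝ) : ℂ) := by
      rw [alphaP, ← hsn_def, ← hc_def, ← hs_def]
      push_cast
      linear_combination ((c : ℂ) ^ 2) * hs2c + ((β : ℂ) ^ 2) * hpyc
        + (-((β : ℂ) ^ 2 * (sn : ℂ) ^ 2)) * Complex.I_sq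
    rw [h, zero_mul] at h2
    have h3 : (β ^ 2 - c ^ 2 : ℝ) = 0 := by exact_mod_cast h2.symm
    linarith
  have hαM0 : alphaM β θ ≠ 0 := by
    intro h
    have h2 : alphaM β θ * (Complex.I * β * sn - (s : ℂ) * c) = ((β ^ 2 - c ^ 2 : ℝ) : ℂ) := by
      rw [alphaM, ← hsn_def, ← hc_def, ← hs_def]
      push_cast
      linear_combination ((c : ℂ) ^ 2) * hs2c + ((β : ℂ) ^ 2) * hpyc
        + (-((β : ℂ) ^ 2 * (sn : ℂ) ^ 2)) * Complex.I_sq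
    rw [h, zero_mul] at h2
    have h3 : (β ^ 2 - c ^ 2 : ℝ) = 0 := by exact_mod_cast h2.symm
    linarith
  have hE0 : E ≠ 0 := Complex.exp_ne_zero _
  have hu0 : (u : ℂ) ≠ 0 := by exact_mod_cast hu.ne'
  have hs0 : (s : ℂ) ≠ 0 := by exact_mod_cast hs.ne'
  have hbc0 : ((β : ℂ) ^ 2 - (c : ℂ) ^ 2) ≠ 0 := by
    intro h
    have h3 : (β ^ 2 - c ^ 2 : ℝ) = 0 := by exact_mod_cast h
    linarith
  have hz1 : ((cφ : ℂ) + (sφ : ℂ) * Complex.I) ≠ 0 := by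
    intro h
    have h2 := congrArg Complex.normSq h
    rw [Complex.normSq_add_mul_I] at h2
    simp at h2
    nlinarith
  have hz2 : ((cφ : ℂ) - (sφ : ℂ) * Complex.I) ≠ 0 := by
    intro h
    have h2 := congrArg Complex.normSq h
    rw [show (cφ : ℂ) - (sφ : ℂ) * Complex.I = ((cφ : ℝ) : ℂ) + ((-sφ : ℝ) : ℂ) * Complex.I by
      push_cast; ring, Complex.normSq_add_mul_I] at h2
    simp at h2
    nlinarith
  have hQP : ((β : ℂ) * s + Complex.I * c * sn) * alphaP β θ
      = ((β : ℂ) ^ 2 - (c : ℂ) ^ 2) * (-Complex.I * sn * s + (β : ℂ) * c) := by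
    rw [alphaP, ← hsn_def, ← hc_def, ← hs_def]
    push_cast
    linear_combination ((β : ℂ) * c) * hs2c + ((β : ℂ) * c) * hpyc
      + (-((β : ℂ) * c * (sn : ℂ) ^ 2)) * Complex.I_sq
  have hQM : ((β : ℂ) * s - Complex.I * c * sn) * alphaM β θ
      = ((β : ℂ) ^ 2 - (c : ℂ) ^ 2) * (-Complex.I * sn * s - (β : ℂ) * c) := by
    rw [alphaM, ← hsn_def, ← hc_def, ← hs_def]
    push_cast
    linear_combination (-((β : ℂ) * c)) * hs2c + (-((β : ℂ) * c)) * hpyc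
      + (((β : ℂ) * c * (sn : ℂ) ^ 2)) * Complex.I_sq
  have hNP : (-Complex.I * (sn : ℂ) + (β : ℂ) * c * ((s : ℝ) : ℂ)⁻¹)
      = (-Complex.I * (sn : ℂ) * s + (β : ℂ) * c) / (s : ℂ) := by
    field_simp
  have hNM : (-Complex.I * (sn : ℂ) - (β : ℂ) * c * ((s : ℝ) : ℂ)⁻¹)
      = (-Complex.I * (sn : ℂ) * s - (β : ℂ) * c) / (s : ℂ) := by
    field_simp
  have dDen : ((β : ℂ) ^ 2 - (c : ℂ) ^ 2) * s * u * E ≠ 0 :=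
    mul_ne_zero (mul_ne_zero (mul_ne_zero hbc0 hs0) hu0) hE0
  have e1 : (-Complex.I * (sn : ℂ) + (β : ℂ) * c * ((s : ℝ) : ℂ)⁻¹)
        / (alphaP β θ * (E * ((u : ℂ) * ((cφ : ℂ) + (sφ : ℂ) * Complex.I))))
      = ((β : ℂ) * s + Complex.I * c * sn) * ((cφ : ℂ) - (sφ : ℂ) * Complex.I)
        / (((β : ℂ) ^ 2 - (c : ℂ) ^ 2) * s * u * E) := by
    rw [hNP, div_div, div_eq_div_iff
      (mul_ne_zero hs0 (mul_ne_zero hαP0 (mul_ne_zero hE0 (mul_ne_zero hu0 hz1)))) dDen]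
    linear_combination
      (-(E * (u : ℂ) * s * ((cφ : ℂ) ^ 2 - (sφ : ℂ) ^ 2 * Complex.I ^ 2))) * hQP
      + (-(E * (u : ℂ) * s * (((β : ℂ) ^ 2 - (c : ℂ) ^ 2)
          * (-Complex.I * sn * s + (β : ℂ) * c)))) * hunitc
      + (E * (u : ℂ) * s * (sφ : ℂ) ^ 2 * (((β : ℂ) ^ 2 - (c : ℂ) ^ 2)
          * (-Complex.I * sn * s + (β : ℂ) * c))) * Complex.I_sq
  have e2 : (-Complex.I * (sn : ℂ) - (β : ℂ) * c * ((s : ℝ) : ℂ)⁻¹)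
        / (alphaM β θ * (E * ((u : ℂ) * ((cφ : ℂ) - (sφ : ℂ) * Complex.I))))
      = ((β : ℂ) * s - Complex.I * c * sn) * ((cφ : ℂ) + (sφ : ℂ) * Complex.I)
        / (((β : ℂ) ^ 2 - (c : ℂ) ^ 2) * s * u * E) := by
    rw [hNM, div_div, div_eq_div_iff
      (mul_ne_zero hs0 (mul_ne_zero hαM0 (mul_ne_zero hE0 (mul_ne_zero hu0 hz2)))) dDen]
    linear_combination
      (-(E * (u : ℂ) * s * ((cφ : ℂ) ^ 2 - (sφ : ℂ) ^ 2 * Complex.I ^ 2))) * hQM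
      + (-(E * (u : ℂ) * s * (((β : ℂ) ^ 2 - (c : ℂ) ^ 2)
          * (-Complex.I * sn * s - (β : ℂ) * c)))) * hunitc
      + (E * (u : ℂ) * s * (sφ : ℂ) ^ 2 * (((β : ℂ) ^ 2 - (c : ℂ) ^ 2)
          * (-Complex.I * sn * s - (β : ℂ) * c))) * Complex.I_sq
  have key : E * calF β θ
      = 2 * Complex.I * ((c : ℂ) * sn * cφ - (β : ℂ) * sφ * s)
        / (((β : ℂ) ^ 2 - (c : ℂ) ^ 2) * u * s) := by
    rw [calF, hvP, hvM, ← hsn_def, ← hc_def, ← hs_def, e1, e2]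
    field_simp
    ring
  have hsqrt2 : (Real.sqrt 2) ^ 2 = 2 := Real.sq_sqrt (by norm_num)
  have h2c : ((Real.sqrt 2 : ℝ) : ℂ) ^ 2 = 2 := by exact_mod_cast congrArg (Complex.ofReal) hsqrt2
  have h2c0 : ((Real.sqrt 2 : ℝ) : ℂ) ≠ 0 := by
    intro h
    have : (Real.sqrt 2 : ℝ) = 0 := by exact_mod_cast h
    nlinarith
  have hG : -Complex.I * (Real.sqrt 2 : ℝ) * ((calG β θ : ℝ) : ℂ)
      = 2 * Complex.I * ((c : ℂ) * sn * cφ - (β : ℂ) * sφ * s)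
        / (((β : ℂ) ^ 2 - (c : ℂ) ^ 2) * u * s) := by
    rw [calG, hcosψ, hsinψ, ← hsn_def, ← hc_def, ← hs_def, ← hu_def]
    push_cast
    field_simp
    ring_nf
    linear_combination (-((β : ℂ) * sφ * (s : ℂ) * 2)
      + (cφ : ℂ) * c * sn * 2) * h2c
  refine ⟨key.trans hG.symm, ?_⟩
  rw [key.trans hG.symm]
  simp
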